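/- For every α ∈ ℂ and every nonzero β ∈ ℂ, the compatible Lie algebra structure L₁₀^α on ℂ⁴, given by [e₁,e₂]=e₃, [e₂,e₃]=e₄, {e₁,e₂}=α e₃, {e₁,e₃}=e₄, degenerates to the structure L₀₉^{α,β} given by [e₁,e₂]=e₃, [e₂,e₃]=e₄, {e₁,e₂}=α e₃, {e₂,e₃}=β e₄. -/

import Mathlib

open Filter Matrix Topology

/-- ℂ⁴ -/
abbrev V4 : Type := Fin 4 → ℂ

/-- GL₄(ℂ) -/
abbrev GL4 := Matrix.GeneralLinearGroup (Fin 4) ℂ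

/-- structure constants of a bilinear map on ℂ⁴: `μ i j` is the value on `(eᵢ, eⱼ)`. -/
abbrev Bil4 := Fin 4 → Fin 4 → V4

/-- standard basis vectors -/
noncomputable def e4 (k : Fin 4) : V4 := Pi.single k (1 : ℂ)

/-- action of `g ∈ GL₄(ℂ)` on a bilinear map: `(g·μ)(x,y) = g μ(g⁻¹x, g⁻¹y)`,
in structure constants. -/
noncomputable def actBil (g : GL4) (μ : Bil4) : Bil4 := fun i j =>
  (g : Matrix (Fin 4) (Fin 4) ℂ).mulVec
    (∑ p, ∑ q,
      (((g⁻¹ : GL4) : Matrix (Fin 4) (Fin 4) ℂ) p i *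
       ((g⁻¹ : GL4) : Matrix (Fin 4) (Fin 4) ℂ) q j) • μ p q)

/-- the pair `(μ, ν)` of bilinear maps on ℂ⁴ degenerates to the pair `(lam, rho)`. -/
def DegeneratesPair (μ ν lam rho : Bil4) : Prop :=
  ∃ g : ℂ → GL4,
    Tendsto (fun t => actBil (g t) μ) (𝓝[≠] (0 : ℂ)) (𝓝 lam) ∧
    Tendsto (fun t => actBil (g t) ν) (𝓝[≠] (0 : ℂ)) (𝓝 rho)

noncomputable def μL10 : Bil4 := fun i j =>
  if i = (0 : Fin 4) ∧ j = (1 : Fin 4) then e4 2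
  else if i = (1 : Fin 4) ∧ j = (0 : Fin 4) then -(e4 2)
  else if i = (1 : Fin 4) ∧ j = (2 : Fin 4) then e4 3
  else if i = (2 : Fin 4) ∧ j = (1 : Fin 4) then -(e4 3)
  else 0

noncomputable def νL10 (α : ℂ) : Bil4 := fun i j =>
  if i = (0 : Fin 4) ∧ j = (1 : Fin 4) then α • e4 2
  else if i = (1 : Fin 4) ∧ j = (0 : Fin 4) then -(α • e4 2)
  else if i = (0 : Fin 4) ∧ j = (2 : Fin 4) then e4 3
  else if i = (2 : Fin 4) ∧ j = (0 : Fin 4) then -(e4 3)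
  else 0

noncomputable def μL09 : Bil4 := fun i j =>
  if i = (0 : Fin 4) ∧ j = (1 : Fin 4) then e4 2
  else if i = (1 : Fin 4) ∧ j = (0 : Fin 4) then -(e4 2)
  else if i = (1 : Fin 4) ∧ j = (2 : Fin 4) then e4 3
  else if i = (2 : Fin 4) ∧ j = (1 : Fin 4) then -(e4 3)
  else 0

noncomputable def νL09 (α β : ℂ) : Bil4 := fun i j =>
  if i = (0 : Fin 4) ∧ j = (1 : Fin 4) then α • e4 2
  else if i = (1 : Fin 4) ∧ j = (0 : Fin 4) then -(α • e4 2)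
  else if i = (1 : Fin 4) ∧ j = (2 : Fin 4) then β • e4 3
  else if i = (2 : Fin 4) ∧ j = (1 : Fin 4) then -(β • e4 3)
  else 0


noncomputable def Amat (β t : ℂ) : Matrix (Fin 4) (Fin 4) ℂ :=
  !![t⁻¹, -β*t⁻¹, 0, 0; 0, 1, 0, 0; 0, 0, t⁻¹, 0; 0, 0, 0, t⁻¹]

noncomputable def Bmat (β t : ℂ) : Matrix (Fin 4) (Fin 4) ℂ :=
  !![t, β, 0, 0; 0, 1, 0, 0; 0, 0, t, 0; 0, 0, 0, t]

lemma AB (β t : ℂ) (ht : t ≠ 0) : Amat β t * Bmat β t = 1 := by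
  ext i j
  fin_cases i <;> fin_cases j <;>
    simp [Amat, Bmat, Matrix.mul_apply, Fin.sum_univ_four, Matrix.one_apply,
      Matrix.vecHead, Matrix.vecTail, ht] <;> field_simp <;> ring

lemma BA (β t : ℂ) (ht : t ≠ 0) : Bmat β t * Amat β t = 1 := by
  ext i j
  fin_cases i <;> fin_cases j <;>
    simp [Amat, Bmat, Matrix.mul_apply, Fin.sum_univ_four, Matrix.one_apply,
      Matrix.vecHead, Matrix.vecTail, ht] <;> field_simp <;> ring

noncomputable def gmap (β t : ℂ) : GL4 :=
  if h : t = 0 then 1 else ⟨Amat β t, Bmat β t, AB β t h, BA β t h⟩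

noncomputable def Dmap : Bil4 := fun i j =>
  if i = (0 : Fin 4) ∧ j = (2 : Fin 4) then e4 3
  else if i = (2 : Fin 4) ∧ j = (0 : Fin 4) then -(e4 3)
  else 0

set_option maxHeartbeats 4000000 in
lemma hmu (β t : ℂ) (ht : t ≠ 0) : actBil (gmap β t) μL10 = μL09 := by
  have hg : ((gmap β t : GL4) : Matrix (Fin 4) (Fin 4) ℂ) = Amat β t := by
    simp [gmap, dif_neg ht]
  have hginv : (((gmap β t)⁻¹ : GL4) : Matrix (Fin 4) (Fin 4) ℂ) = Bmat β t := by
    simp [gmap, dif_neg ht]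
  funext i j k
  fin_cases i <;> fin_cases j <;> fin_cases k <;>
    simp [actBil, hg, hginv, μL10, μL09, Amat, Bmat, Fin.sum_univ_four,
      Matrix.mulVec, dotProduct, e4, Pi.single_apply,
      Matrix.vecHead, Matrix.vecTail] <;> field_simp

set_option maxHeartbeats 4000000 in
lemma hnu (α β t : ℂ) (ht : t ≠ 0) :
    actBil (gmap β t) (νL10 α) = fun i j => νL09 α β i j + t • Dmap i j := by
  have hg : ((gmap β t : GL4) : Matrix (Fin 4) (Fin 4) ℂ) = Amat β t := by
    simp [gmap, dif_neg ht]
  have hginv : (((gmap β t)⁻¹ : GL4) : Matrix (Fin 4) (Fin 4) ℂ) = Bmat β t := by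
    simp [gmap, dif_neg ht]
  funext i j k
  fin_cases i <;> fin_cases j <;> fin_cases k <;>
    simp [actBil, hg, hginv, νL10, νL09, Dmap, Amat, Bmat, Fin.sum_univ_four,
      Matrix.mulVec, dotProduct, e4, Pi.single_apply,
      Matrix.vecHead, Matrix.vecTail] <;> field_simp

/-- for every α and every nonzero β, L₁₀^α degenerates to L₀₉^{α,β}. -/
theorem stmt19 : ∀ α β : ℂ, β ≠ 0 →
    DegeneratesPair μL10 (νL10 α) μL09 (νL09 α β) := by
  intro α β _
  refine ⟨gmap β, ?_, ?_⟩
  · have hev : ∀ᶠ t in 𝓝[≠] (0 : ℂ), actBil (gmap β t) μL10 = μL09 := by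
      filter_upwards [self_mem_nhdsWithin] with t ht
      exact hmu β t ht
    exact Tendsto.congr' (by filter_upwards [hev] with t h using h.symm)
      tendsto_const_nhds
  · have hev : ∀ᶠ t in 𝓝[≠] (0 : ℂ),
        (fun s => (fun i j => νL09 α β i j + s • Dmap i j)) t
          = actBil (gmap β t) (νL10 α) := by
      filter_upwards [self_mem_nhdsWithin] with t ht
      exact (hnu α β t ht).symm
    refine Tendsto.congr' hev ?_
    have hc : Continuous fun s : ℂ => (fun i j => νL09 α β i j + s • Dmap i j : Bil4) := by
      refine continuous_pi fun i => continuous_pi fun j => ?_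
      exact continuous_const.add (continuous_id.smul continuous_const)
    have h0 : (fun i j => νL09 α β i j + (0 : ℂ) • Dmap i j : Bil4) = νL09 α β := by
      funext i j; simp
    have := (hc.tendsto 0).mono_left (nhdsWithin_le_nhds (s := {(0:ℂ)}ᶜ))
    rwa [h0] at this
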